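/- For two starting digits d, d' both not in {1,2,4,6}, the look-and-say-again sequences with seeds d and d' agree at every index after replacing every occurrence of d by d': i.e., T_n(d') is obtained from T_n(d) by substituting d' for d. -/

import Mathlib

/-- Run-length encoding of a digit string (a list of digits). -/
def rle : List ℕ → List (ℕ × ℕ)
  | [] => []
  | a :: t =>
    match rle t with
    | [] => [(a, 1)]
    | (b, n) :: r => if a = b then (a, n + 1) :: r else (a, 1) :: (b, n) :: r

/-- `P` is a run-length representation of the digit string `S`:
multiplicities are positive, adjacent base digits are distinct, and `S` is
the concatenation of the runs. -/
def IsRLE (S : List ℕ) (P : List (ℕ × ℕ)) : Prop :=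
  (∀ p ∈ P, 1 ≤ p.2) ∧ List.Chain' (fun p q => p.1 ≠ q.1) P ∧
    S = (P.map fun p => List.replicate p.2 p.1).flatten

/-- The look-and-say-again step: each run `a^n` is read off as `n n a a`. -/
def lsa (T : List ℕ) : List ℕ := (rle T).flatMap fun p => [p.2, p.2, p.1, p.1]

/-- Property `P`: every run has base digit in `{1,2,4,6}` and length in `{2,4,6}`. -/
def propP (T : List ℕ) : Prop :=
  ∀ p ∈ rle T, p.1 ∈ ({1, 2, 4, 6} : Set ℕ) ∧ p.2 ∈ ({2, 4, 6} : Set ℕ)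

lemma rle_cons (a : ℕ) (t : List ℕ) :
    rle (a :: t) = match rle t with
      | [] => [(a, 1)]
      | (b, n) :: r => if a = b then (a, n + 1) :: r else (a, 1) :: (b, n) :: r := by
  rw [rle]

lemma rle_cons_nil (a : ℕ) (t : List ℕ) (h : rle t = []) : rle (a :: t) = [(a,1)] := by
  rw [rle, h]

lemma rle_cons_cons (a b n : ℕ) (r : List (ℕ × ℕ)) (t : List ℕ) (h : rle t = (b,n) :: r) :
    rle (a :: t) = if a = b then (a, n + 1) :: r else (a, 1) :: (b, n) :: r := by
  rw [rle, h]

lemma rle_fst_mem : ∀ (t : List ℕ) (p : ℕ × ℕ), p ∈ rle t → p.1 ∈ t := by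
  intro t
  induction t with
  | nil => simp [rle]
  | cons a t ih =>
    intro p hp
    rcases h : rle t with _ | ⟨⟨b, n⟩, r⟩
    · rw [rle_cons_nil a t h] at hp
      simp at hp; simp [hp]
    · rw [rle_cons_cons a b n r t h] at hp
      by_cases hab : a = b
      · simp [hab] at hp
        rcases hp with h1 | h1
        · simp [h1]; exact Or.inl hab.symm
        · exact List.mem_cons_of_mem a (ih p (by rw [h]; exact List.mem_cons_of_mem _ h1))
      · simp [hab] at hp
        rcases hp with h1 | h1 | h1
        · simp [h1]
        · exact List.mem_cons_of_mem a (ih p (by rw [h, h1]; exact List.mem_cons_self))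
        · exact List.mem_cons_of_mem a (ih p (by rw [h]; exact List.mem_cons_of_mem _ h1))

lemma rle_chain : ∀ (t : List ℕ), List.Chain' (fun p q : ℕ × ℕ => p.1 ≠ q.1) (rle t) := by
  intro t
  induction t with
  | nil => simp [rle]; exact List.isChain_nil
  | cons a t ih =>
    rcases h : rle t with _ | ⟨⟨b, n⟩, r⟩
    · rw [rle_cons_nil a t h]; exact List.isChain_singleton _
    · rw [rle_cons_cons a b n r t h]
      rw [h] at ih
      by_cases hab : a = b
      · simp only [if_pos hab]
        subst hab
        exact (List.isChain_cons.mpr ⟨by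
          intro q hq
          exact (List.isChain_cons.mp ih).1 q hq, (List.isChain_cons.mp ih).2⟩)
      · simp only [if_neg hab]
        exact List.isChain_cons_cons.mpr ⟨hab, ih⟩

lemma key : ∀ (P' : List (ℕ × ℕ)) (a c : ℕ),
    List.Chain' (fun p q : ℕ × ℕ => p.1 ≠ q.1) ((a, c) :: P') →
    ∃ k R', rle (((a, c) :: P').flatMap (fun p => [p.2, p.2, p.1, p.1])) = (c, k) :: R' ∧
      (k = 2 ∨ k = 4 ∨ k = 6) ∧ (k ≠ 2 → c = a) ∧
      (∀ q ∈ R', q.2 = 2 ∨ q.2 = 4 ∨ q.2 = 6) := by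
  intro P'
  induction P' with
  | nil =>
    intro a c _
    by_cases hca : c = a
    · refine ⟨4, [], ?_, by omega, fun _ => hca, by simp⟩
      simp only [List.flatMap_cons, List.flatMap_nil, List.append_nil]
      simp [rle, hca]
    · refine ⟨2, [(a, 2)], ?_, by omega, fun h => absurd rfl h, by simp⟩
      simp only [List.flatMap_cons, List.flatMap_nil, List.append_nil]
      simp [rle, hca]
  | cons p P'' ih =>
    intro a c hch
    obtain ⟨a', c'⟩ := p
    have haa' : a ≠ a' := (List.isChain_cons_cons.mp hch).1
    have hch' : List.Chain' (fun p q : ℕ × ℕ => p.1 ≠ q.1) ((a', c') :: P'') :=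
      (List.isChain_cons_cons.mp hch).2
    obtain ⟨k, R', hM, hk, hk2, hR'⟩ := ih a' c' hch'
    set M := (((a', c') :: P'').flatMap (fun p => [p.2, p.2, p.1, p.1])) with hMdef
    have hflat : (((a, c) :: (a', c') :: P'').flatMap (fun p => [p.2, p.2, p.1, p.1]))
        = c :: c :: a :: a :: M := by simp [hMdef]
    rw [hflat]
    by_cases hac' : a = c'
    · have hk2' : k = 2 := by
        by_contra hne
        exact haa' (hac'.trans (hk2 hne) ▸ rfl)
      have h1 : rle (a :: M) = (a, k + 1) :: R' := by
        rw [rle_cons_cons a c' k R' M hM, if_pos hac']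
      have h2 : rle (a :: a :: M) = (a, k + 2) :: R' := by
        rw [rle_cons_cons a a (k+1) R' _ h1, if_pos rfl]
      by_cases hca : c = a
      · have h3 : rle (c :: a :: a :: M) = (a, k + 3) :: R' := by
          rw [rle_cons_cons c a (k+2) R' _ h2, if_pos hca, hca]
        have h4 : rle (c :: c :: a :: a :: M) = (a, k + 4) :: R' := by
          rw [rle_cons_cons c a (k+3) R' _ h3, if_pos hca, hca]
        refine ⟨6, R', ?_, by omega, fun _ => hca, hR'⟩
        rw [h4, hca, hk2']
      · have h3 : rle (c :: a :: a :: M) = (c, 1) :: (a, k + 2) :: R' := by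
          rw [rle_cons_cons c a (k+2) R' _ h2, if_neg hca]
        have h4 : rle (c :: c :: a :: a :: M) = (c, 2) :: (a, k + 2) :: R' := by
          rw [rle_cons_cons c c 1 _ _ h3, if_pos rfl]
        refine ⟨2, (a, k + 2) :: R', h4, by omega, fun h => absurd rfl h, ?_⟩
        intro q hq
        rcases List.mem_cons.mp hq with hq | hq
        · simp [hq]; omega
        · exact hR' q hq
    · have h1 : rle (a :: M) = (a, 1) :: (c', k) :: R' := by
        rw [rle_cons_cons a c' k R' M hM, if_neg hac']
      have h2 : rle (a :: a :: M) = (a, 2) :: (c', k) :: R' := by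
        rw [rle_cons_cons a a 1 _ _ h1, if_pos rfl]
      by_cases hca : c = a
      · have h3 : rle (c :: a :: a :: M) = (a, 3) :: (c', k) :: R' := by
          rw [rle_cons_cons c a 2 _ _ h2, if_pos hca, hca]
        have h4 : rle (c :: c :: a :: a :: M) = (a, 4) :: (c', k) :: R' := by
          rw [rle_cons_cons c a 3 _ _ h3, if_pos hca, hca]
        refine ⟨4, (c', k) :: R', by rw [h4, hca], by omega, fun _ => hca, ?_⟩
        intro q hq
        rcases List.mem_cons.mp hq with hq | hq
        · simp [hq]; omega
        · exact hR' q hq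
      · have h3 : rle (c :: a :: a :: M) = (c, 1) :: (a, 2) :: (c', k) :: R' := by
          rw [rle_cons_cons c a 2 _ _ h2, if_neg hca]
        have h4 : rle (c :: c :: a :: a :: M) = (c, 2) :: (a, 2) :: (c', k) :: R' := by
          rw [rle_cons_cons c c 1 _ _ h3, if_pos rfl]
        refine ⟨2, (a, 2) :: (c', k) :: R', h4, by omega, fun h => absurd rfl h, ?_⟩
        intro q hq
        rcases List.mem_cons.mp hq with hq | hq
        · simp [hq]
        rcases List.mem_cons.mp hq with hq | hq
        · simp only [hq]; exact hk
        · exact hR' q hq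

lemma lsa_counts (T : List ℕ) : ∀ q ∈ rle (lsa T), q.2 = 2 ∨ q.2 = 4 ∨ q.2 = 6 := by
  rcases h : rle T with _ | ⟨⟨a, c⟩, P'⟩
  · intro q hq
    rw [lsa, h] at hq
    simp [rle] at hq
  · have hch := rle_chain T
    rw [h] at hch
    obtain ⟨k, R', heq, hk, _, hR'⟩ := key P' a c hch
    intro q hq
    rw [lsa, h, heq] at hq
    rcases List.mem_cons.mp hq with hq | hq
    · simp only [hq]; exact hk
    · exact hR' q hq

lemma mem_lsa (T : List ℕ) (x : ℕ) (hx : x ∈ lsa T) :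
    ∃ p ∈ rle T, x = p.1 ∨ x = p.2 := by
  rw [lsa] at hx
  rw [List.mem_flatMap] at hx
  obtain ⟨p, hp, hxp⟩ := hx
  refine ⟨p, hp, ?_⟩
  simp at hxp
  tauto

lemma sig_inj (d d' x y : ℕ) (hx : x ≠ d') (hy : y ≠ d') :
    ((if x = d then d' else x) = (if y = d then d' else y)) ↔ x = y := by
  split_ifs <;> omega

lemma rle_map (d d' : ℕ) : ∀ (t : List ℕ), d' ∉ t →
    rle (t.map (fun x => if x = d then d' else x)) =
      (rle t).map (fun p => ((if p.1 = d then d' else p.1), p.2)) := by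
  intro t
  induction t with
  | nil => simp [rle]
  | cons a t ih =>
    intro hd'
    have hat : d' ∉ t := fun h => hd' (List.mem_cons_of_mem a h)
    have ha : a ≠ d' := fun h => hd' (h ▸ List.mem_cons_self (a := a) (l := t))
    rcases h : rle t with _ | ⟨⟨b, n⟩, r⟩
    · have h1 : rle (t.map (fun x => if x = d then d' else x)) = [] := by
        rw [ih hat, h]; rfl
      simp only [List.map_cons]
      rw [rle_cons_nil _ _ h1, rle_cons_nil _ _ h, List.map_cons]
      rfl
    · have hb : b ≠ d' := by
        intro hbd'
        exact hat (hbd' ▸ rle_fst_mem t (b, n) (h ▸ List.mem_cons_self))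
      have h1 : rle (t.map (fun x => if x = d then d' else x)) =
          ((if b = d then d' else b), n) :: r.map (fun p => ((if p.1 = d then d' else p.1), p.2)) := by
        rw [ih hat, h, List.map_cons]
      simp only [List.map_cons]
      rw [rle_cons_cons _ _ _ _ _ h1, rle_cons_cons _ _ _ _ _ h]
      by_cases hab : a = b
      · rw [if_pos ((sig_inj d d' a b ha hb).mpr hab), if_pos hab, List.map_cons]
      · rw [if_neg (fun hh => hab ((sig_inj d d' a b ha hb).mp hh)), if_neg hab]
        simp

lemma lsa_map (d d' : ℕ) (T : List ℕ) (hd'T : d' ∉ T)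
    (hc : ∀ q ∈ rle T, q.2 ≠ d) :
    lsa (T.map (fun x => if x = d then d' else x)) =
      (lsa T).map (fun x => if x = d then d' else x) := by
  rw [lsa, lsa, rle_map d d' T hd'T, List.flatMap_map, List.map_flatMap]
  apply List.flatMap_congr
  intro p hp
  have h2 := hc p hp
  simp [h2]

/-- For seeds `d, d' ∉ {1,2,4,6}`, the look-and-say-again sequences agree at
every index after substituting `d'` for `d`. -/
theorem lsa_seq_subst (d d' : ℕ) (hd9 : d ≤ 9) (hd'9 : d' ≤ 9)
    (hd : d ∉ ({1, 2, 4, 6} : Set ℕ)) (hd' : d' ∉ ({1, 2, 4, 6} : Set ℕ)) :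
    ∀ n : ℕ, (lsa^[n] [d]).map (fun x => if x = d then d' else x) = lsa^[n] [d'] := by
  by_cases hdd : d = d'
  · subst hdd
    intro n
    have hfun : (fun x : ℕ => if x = d then d else x) = id := by
      funext x
      split <;> simp_all
    rw [hfun, List.map_id]
  · have hdset : d ≠ 1 ∧ d ≠ 2 ∧ d ≠ 4 ∧ d ≠ 6 := by simpa using hd
    have hdset' : d' ≠ 1 ∧ d' ≠ 2 ∧ d' ≠ 4 ∧ d' ≠ 6 := by simpa using hd'
    suffices h : ∀ n : ℕ, (lsa^[n] [d]).map (fun x => if x = d then d' else x) = lsa^[n] [d'] ∧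
        d' ∉ lsa^[n] [d] ∧
        (∀ q ∈ rle (lsa^[n] [d]), q.2 = 1 ∨ q.2 = 2 ∨ q.2 = 4 ∨ q.2 = 6) by
      exact fun n => (h n).1
    intro n
    induction n with
    | zero =>
      refine ⟨by simp, by simpa using fun h => hdd h.symm, ?_⟩
      have : rle [d] = [(d, 1)] := by simp [rle]
      rw [Function.iterate_zero_apply, this]
      intro q hq
      simp at hq
      simp [hq]
    | succ n ih =>
      obtain ⟨h1, h2, h3⟩ := ih
      rw [Function.iterate_succ_apply', Function.iterate_succ_apply']
      set T := lsa^[n] [d] with hT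
      have hcnt : ∀ q ∈ rle T, q.2 ≠ d := by
        intro q hq
        have := h3 q hq
        omega
      refine ⟨?_, ?_, ?_⟩
      · rw [← lsa_map d d' T h2 hcnt, h1]
      · intro hmem
        obtain ⟨p, hp, hx⟩ := mem_lsa T d' hmem
        rcases hx with hx | hx
        · exact h2 (hx ▸ rle_fst_mem T p hp)
        · have := h3 p hp
          omega
      · intro q hq
        have := lsa_counts T q hq
        tauto
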